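/- For every r > 0, 2r(sinhc(2r) − 1) = (4/3) r³ + O(r⁵) as r → 0; moreover if a probability measure μ on hyperbolic n-space is supported in a ball of radius r, then its center of mass p and its cosh-center of mass q satisfy d(p,q) ≤ 2r(sinhc(2r) − 1). -/

import Mathlib

noncomputable section

/-- The Minkowski bilinear form on `ℝ^{n,1}`. -/
def mink (n : ℕ) (x y : Fin (n+1) → ℝ) : ℝ :=
  (∑ i : Fin n, x i.castSucc * y i.castSucc) - x (Fin.last n) * y (Fin.last n)

/-- Membership in the hyperboloid model of hyperbolic `n`-space. -/
def IsHyp (n : ℕ) (x : Fin (n+1) → ℝ) : Prop :=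
  mink n x x = -1 ∧ 0 < x (Fin.last n)

/-- Tangency to the hyperboloid at `x`. -/
def IsTang (n : ℕ) (x v : Fin (n+1) → ℝ) : Prop := mink n x v = 0

/-- Inverse hyperbolic cosine. -/
def acosh (x : ℝ) : ℝ := Real.log (x + Real.sqrt (x ^ 2 - 1))

/-- Hyperbolic distance in the hyperboloid model: `cosh (dist x y) = -⟨x,y⟩`. -/
def hdist (n : ℕ) (x y : Fin (n+1) → ℝ) : ℝ := acosh (-(mink n x y))

/-- Norm of a tangent vector (the Minkowski form is positive definite on tangent spaces). -/
def tnorm (n : ℕ) (v : Fin (n+1) → ℝ) : ℝ := Real.sqrt (mink n v v)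

/-- The Riemannian exponential map of the hyperboloid. -/
def hexp (n : ℕ) (x v : Fin (n+1) → ℝ) : Fin (n+1) → ℝ :=
  Real.cosh (tnorm n v) • x + (Real.sinh (tnorm n v) / tnorm n v) • v

/-- Unit tangent vector at `x` pointing towards `y`. -/
def hdir (n : ℕ) (x y : Fin (n+1) → ℝ) : Fin (n+1) → ℝ :=
  (Real.sinh (hdist n x y))⁻¹ • (y + (mink n x y) • x)

/-- The inverse exponential map `exp_x⁻¹ (y)`. -/
def hlog (n : ℕ) (x y : Fin (n+1) → ℝ) : Fin (n+1) → ℝ :=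
  hdist n x y • hdir n x y

/-- Parallel transport from `T_y ℍⁿ` to `T_x ℍⁿ` along the geodesic from `y` to `x`. -/
def ptrans (n : ℕ) (x y v : Fin (n+1) → ℝ) : Fin (n+1) → ℝ :=
  v + ((mink n x v) / (1 - mink n x y)) • (x + y)

/-- Minkowski volume form on `ℝ^{2,1}`; `det3 x u w = ‖u‖‖w‖ sin θ` for tangent
vectors `u, w` at `x ∈ ℍ²`, where `θ` is the oriented angle from `u` to `w`. -/
def det3 (a b c : Fin 3 → ℝ) : ℝ :=
  a 0 * (b 1 * c 2 - b 2 * c 1) - a 1 * (b 0 * c 2 - b 2 * c 0)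
    + a 2 * (b 0 * c 1 - b 1 * c 0)

/-- `sinhc x = sinh x / x`, with `sinhc 0 = 1`. -/
def sinhc (x : ℝ) : ℝ := if x = 0 then 1 else Real.sinh x / x

open MeasureTheory

theorem sinh_taylor5 (y : ℝ) (hy : |y| ≤ 1) : |Real.sinh y - y - y^3/6| ≤ |y|^5/100 := by
  have h1 := Real.exp_bound hy (n := 5) (by norm_num)
  have h2 := Real.exp_bound (x := -y) (by rwa [abs_neg]) (n := 5) (by norm_num)
  have e1 : ∑ m ∈ Finset.range 5, y ^ m / m.factorial
      = 1 + y + y^2/2 + y^3/6 + y^4/24 := by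
    norm_num [Finset.sum_range_succ, Nat.factorial]
  have e2 : ∑ m ∈ Finset.range 5, (-y) ^ m / m.factorial
      = 1 - y + y^2/2 - y^3/6 + y^4/24 := by
    norm_num [Finset.sum_range_succ, Nat.factorial]; ring
  rw [e1] at h1; rw [e2] at h2
  rw [Real.sinh_eq]
  have habs : |(-y)| ^ 5 = |y| ^ 5 := by rw [abs_neg]
  rw [habs] at h2
  norm_num [Nat.factorial] at h1 h2
  have key : |(Real.exp y - Real.exp (-y)) - (2*y + y^3/3)|
      ≤ |y|^5 * (1/100) + |y|^5 * (1/100) := by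
    calc |(Real.exp y - Real.exp (-y)) - (2*y + y^3/3)|
        = |(Real.exp y - (1 + y + y^2/2 + y^3/6 + y^4/24))
            - (Real.exp (-y) - (1 - y + y^2/2 - y^3/6 + y^4/24))| := by ring_nf
      _ ≤ _ := le_trans (abs_sub _ _) (by linarith)
  have hE : (Real.exp y - Real.exp (-y))/2 - y - y^3/6
      = ((Real.exp y - Real.exp (-y)) - (2*y + y^3/3))/2 := by ring
  rw [hE, abs_div, abs_two]
  linarith

theorem part1 :
    (fun r : ℝ => 2 * r * (sinhc (2 * r) - 1) - (4/3) * r ^ 3)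
      =O[nhds 0] (fun r : ℝ => r ^ 5) := by
  rw [Asymptotics.isBigO_iff]
  refine ⟨1, ?_⟩
  have hev : ∀ᶠ r : ℝ in nhds 0, |r - 0| < 1/2 := eventually_abs_sub_lt 0 (by norm_num)
  filter_upwards [hev] with r hr
  rw [sub_zero] at hr
  rcases eq_or_ne r 0 with h0 | h0
  · simp [h0, sinhc]
  · have h2r : (2*r) ≠ 0 := by positivity
    have hs : sinhc (2*r) = Real.sinh (2*r) / (2*r) := by simp [sinhc, h2r]
    have heq : 2 * r * (sinhc (2 * r) - 1) - (4/3) * r ^ 3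
        = Real.sinh (2*r) - (2*r) - (2*r)^3/6 := by
      rw [hs]; field_simp; ring
    rw [Real.norm_eq_abs, Real.norm_eq_abs, heq, abs_pow]
    have hb : |2*r| ≤ 1 := by rw [abs_mul, abs_two]; linarith [hr]
    have ht := sinh_taylor5 (2*r) hb
    have h32 : |2*r|^5 = 32 * |r|^5 := by rw [abs_mul, abs_two]; ring
    calc |Real.sinh (2*r) - 2*r - (2*r)^3/6| ≤ |2*r|^5/100 := ht
      _ = 32*|r|^5/100 := by rw [h32]
      _ ≤ 1 * |r|^5 := by nlinarith [pow_nonneg (abs_nonneg r) 5]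

open Real

section basics
variable {n : ℕ}

lemma mink_comm (x y : Fin (n+1) → ℝ) : mink n x y = mink n y x := by
  unfold mink; congr 1; · exact Finset.sum_congr rfl fun i _ => mul_comm _ _
  · exact mul_comm _ _

lemma mink_add_right (x y z : Fin (n+1) → ℝ) : mink n x (y + z) = mink n x y + mink n x z := by
  unfold mink; simp [Pi.add_apply, mul_add, Finset.sum_add_distrib]; ring

lemma mink_smul_right (t : ℝ) (x y : Fin (n+1) → ℝ) : mink n x (t • y) = t * mink n x y := by
  unfold mink
  simp only [Pi.smul_apply, smul_eq_mul, mul_sub, Finset.mul_sum]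
  congr 1
  · exact Finset.sum_congr rfl fun i _ => by ring
  · ring

lemma mink_add_left (x y z : Fin (n+1) → ℝ) : mink n (x + y) z = mink n x z + mink n y z := by
  rw [mink_comm, mink_add_right, mink_comm z x, mink_comm z y]

lemma mink_smul_left (t : ℝ) (x y : Fin (n+1) → ℝ) : mink n (t • x) y = t * mink n x y := by
  rw [mink_comm, mink_smul_right, mink_comm]

lemma hyp_last_ge_one {x : Fin (n+1) → ℝ} (hx : IsHyp n x) : 1 ≤ x (Fin.last n) := by
  obtain ⟨h1, h2⟩ := hx
  unfold mink at h1
  have hs : 0 ≤ ∑ i : Fin n, x i.castSucc * x i.castSucc :=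
    Finset.sum_nonneg fun i _ => mul_self_nonneg _
  nlinarith

lemma mink_self_le_neg_one {x y : Fin (n+1) → ℝ} (hx : IsHyp n x) (hy : IsHyp n y) :
    mink n x y ≤ -1 := by
  have hx1 := hyp_last_ge_one hx
  have hy1 := hyp_last_ge_one hy
  obtain ⟨hxm, -⟩ := hx
  obtain ⟨hym, -⟩ := hy
  unfold mink at *
  have cs := Finset.sum_mul_sq_le_sq_mul_sq Finset.univ (fun i : Fin n => x i.castSucc)
    (fun i : Fin n => y i.castSucc)
  simp only [← sq] at *
  set S := ∑ i : Fin n, x i.castSucc * y i.castSucc with hS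
  set a := x (Fin.last n); set b := y (Fin.last n)
  by_contra h
  push_neg at h
  have h0 : 0 ≤ a * b - 1 := by nlinarith
  have h1 : S > a * b - 1 := by linarith
  have h2 : (a*b-1)^2 < S^2 := by nlinarith
  nlinarith [sq_nonneg (a - b)]

end basics

section tangent
variable {n : ℕ}

lemma spatial_key {x v : Fin (n+1) → ℝ} (hx : IsHyp n x) (hv : mink n x v = 0) :
    (x (Fin.last n))^2 * (mink n v v) ≥ ∑ i : Fin n, v i.castSucc ^ 2 := by
  have hx1 := hyp_last_ge_one hx
  obtain ⟨hxm, -⟩ := hx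
  unfold mink at *
  have cs := Finset.sum_mul_sq_le_sq_mul_sq Finset.univ (fun i : Fin n => x i.castSucc)
    (fun i : Fin n => v i.castSucc)
  simp only [← sq] at *
  have hT : ∑ i : Fin n, x i.castSucc * v i.castSucc
      = x (Fin.last n) * v (Fin.last n) := by linarith
  rw [hT] at cs
  have hP : (∑ i : Fin n, x i.castSucc ^ 2) = x (Fin.last n)^2 - 1 := by linarith
  rw [hP] at cs
  nlinarith [cs]

lemma tang_mink_self_nonneg {x v : Fin (n+1) → ℝ} (hx : IsHyp n x) (hv : mink n x v = 0) :
    0 ≤ mink n v v := by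
  have key := spatial_key hx hv
  have hs : 0 ≤ ∑ i : Fin n, v i.castSucc ^ 2 := Finset.sum_nonneg fun i _ => sq_nonneg _
  have hx2 : (0:ℝ) < (x (Fin.last n))^2 := by nlinarith [hyp_last_ge_one hx]
  by_contra h
  push_neg at h
  nlinarith [mul_neg_of_pos_of_neg hx2 h]

lemma tang_eq_zero {x v : Fin (n+1) → ℝ} (hx : IsHyp n x) (hv : mink n x v = 0)
    (h0 : mink n v v = 0) : v = 0 := by
  have key := spatial_key hx hv
  rw [h0, mul_zero] at key
  have hsum : ∑ i : Fin n, v i.castSucc ^ 2 = 0 := le_antisymm key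
    (Finset.sum_nonneg fun i _ => sq_nonneg _)
  have hs : ∀ i : Fin n, v i.castSucc = 0 := by
    intro i
    have := (Finset.sum_eq_zero_iff_of_nonneg (fun i _ => sq_nonneg (v (Fin.castSucc i)))).1 hsum
      i (Finset.mem_univ i)
    exact pow_eq_zero_iff (n := 2) (by norm_num) |>.1 this
  have hlast : v (Fin.last n) = 0 := by
    unfold mink at h0
    have hz : ∑ i : Fin n, v i.castSucc * v i.castSucc = 0 := by
      refine Finset.sum_eq_zero fun i _ => by rw [hs i]; ring
    rw [hz] at h0
    nlinarith
  funext i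
  simp only [Pi.zero_apply]
  exact Fin.lastCases hlast hs i

lemma tang_cs {x v w : Fin (n+1) → ℝ} (hx : IsHyp n x) (hv : mink n x v = 0)
    (hw : mink n x w = 0) : (mink n v w)^2 ≤ mink n v v * mink n w w := by
  have hQ : ∀ t : ℝ, 0 ≤ mink n v v + 2 * t * mink n v w + t^2 * mink n w w := by
    intro t
    have htan : mink n x (v + t • w) = 0 := by
      rw [mink_add_right, mink_smul_right, hv, hw]; ring
    have h2 := tang_mink_self_nonneg hx htan
    simp only [mink_add_left, mink_add_right, mink_smul_left, mink_smul_right,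
      mink_comm w v] at h2
    nlinarith [h2]
  rcases eq_or_lt_of_le (tang_mink_self_nonneg hx hw) with h | h
  · have hB : mink n v w = 0 := by
      by_contra hB
      have h1 := hQ (-(mink n v v + 1) / (2 * mink n v w))
      have e : 2 * (-(mink n v v + 1) / (2 * mink n v w)) * mink n v w
          = -(mink n v v + 1) := by field_simp
      rw [← h] at h1
      nlinarith [h1, e]
    simp [hB, ← h]
  · have h1 := hQ (-(mink n v w) / (mink n w w))
    have hw0 : mink n w w ≠ 0 := ne_of_gt h
    have e : mink n v v + 2 * (-(mink n v w) / (mink n w w)) * mink n v w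
        + (-(mink n v w) / (mink n w w))^2 * mink n w w
        = mink n v v - (mink n v w)^2 / mink n w w := by field_simp; ring
    rw [e] at h1
    have h2 : (mink n v w)^2 / mink n w w ≤ mink n v v := by linarith
    calc (mink n v w)^2 = (mink n v w)^2 / mink n w w * mink n w w := by field_simp
      _ ≤ mink n v v * mink n w w := by
          exact mul_le_mul_of_nonneg_right h2 (le_of_lt h)

end tangent

section acosh_facts

lemma sqrt_sq_sub_one_nonneg {t : ℝ} (h : 1 ≤ t) : 0 ≤ Real.sqrt (t^2 - 1) := Real.sqrt_nonneg _

lemma acosh_base_pos {t : ℝ} (h : 1 ≤ t) : 0 < t + Real.sqrt (t^2-1) := by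
  have := Real.sqrt_nonneg (t^2-1); linarith

lemma acosh_nonneg {t : ℝ} (h : 1 ≤ t) : 0 ≤ acosh t := by
  unfold acosh
  apply Real.log_nonneg
  have := Real.sqrt_nonneg (t^2-1); linarith

lemma cosh_acosh {t : ℝ} (h : 1 ≤ t) : Real.cosh (acosh t) = t := by
  unfold acosh
  have hpos := acosh_base_pos h
  rw [Real.cosh_eq, Real.exp_log hpos, Real.exp_neg, Real.exp_log hpos]
  have hsq : Real.sqrt (t^2-1) ^ 2 = t^2 - 1 := Real.sq_sqrt (by nlinarith)
  have hinv : (t + Real.sqrt (t^2-1))⁻¹ = t - Real.sqrt (t^2-1) :=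
    inv_eq_of_mul_eq_one_right (by nlinarith [hsq])
  rw [hinv]; ring

lemma sinh_acosh {t : ℝ} (h : 1 ≤ t) : Real.sinh (acosh t) = Real.sqrt (t^2-1) := by
  unfold acosh
  have hpos := acosh_base_pos h
  rw [Real.sinh_eq, Real.exp_log hpos, Real.exp_neg, Real.exp_log hpos]
  have hsq : Real.sqrt (t^2-1) ^ 2 = t^2 - 1 := Real.sq_sqrt (by nlinarith)
  have hinv : (t + Real.sqrt (t^2-1))⁻¹ = t - Real.sqrt (t^2-1) :=
    inv_eq_of_mul_eq_one_right (by nlinarith [hsq])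
  rw [hinv]; ring

lemma acosh_cosh {s : ℝ} (h : 0 ≤ s) : acosh (Real.cosh s) = s := by
  unfold acosh
  have h1 : Real.cosh s ^ 2 - 1 = Real.sinh s ^ 2 := by
    have := Real.cosh_sq_sub_sinh_sq s; linarith
  rw [h1, Real.sqrt_sq (by rwa [Real.sinh_nonneg_iff]), Real.cosh_add_sinh, Real.log_exp]

lemma acosh_le_acosh {s t : ℝ} (h1 : 1 ≤ s) (h : s ≤ t) : acosh s ≤ acosh t := by
  unfold acosh
  apply Real.log_le_log (acosh_base_pos h1)
  have : Real.sqrt (s^2-1) ≤ Real.sqrt (t^2-1) := Real.sqrt_le_sqrt (by nlinarith)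
  linarith

end acosh_facts

section hdist_facts
variable {n : ℕ}

lemma mink_sub_right (x y z : Fin (n+1) → ℝ) : mink n x (y - z) = mink n x y - mink n x z := by
  rw [sub_eq_add_neg, mink_add_right, ← neg_one_smul ℝ z, mink_smul_right]; ring

lemma mink_sub_left (x y z : Fin (n+1) → ℝ) : mink n (x - y) z = mink n x z - mink n y z := by
  rw [mink_comm, mink_sub_right, mink_comm z x, mink_comm z y]

lemma neg_mink_ge_one {x y : Fin (n+1) → ℝ} (hx : IsHyp n x) (hy : IsHyp n y) :
    1 ≤ -(mink n x y) := by
  have := mink_self_le_neg_one hx hy; linarith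

lemma hdist_nonneg {x y : Fin (n+1) → ℝ} (hx : IsHyp n x) (hy : IsHyp n y) :
    0 ≤ hdist n x y := acosh_nonneg (neg_mink_ge_one hx hy)

lemma cosh_hdist {x y : Fin (n+1) → ℝ} (hx : IsHyp n x) (hy : IsHyp n y) :
    Real.cosh (hdist n x y) = -(mink n x y) := cosh_acosh (neg_mink_ge_one hx hy)

lemma sinh_hdist_nonneg {x y : Fin (n+1) → ℝ} (hx : IsHyp n x) (hy : IsHyp n y) :
    0 ≤ Real.sinh (hdist n x y) := by
  rw [Real.sinh_nonneg_iff]; exact hdist_nonneg hx hy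

lemma hdist_comm (x y : Fin (n+1) → ℝ) : hdist n x y = hdist n y x := by
  unfold hdist; rw [mink_comm]

lemma hdist_self {x : Fin (n+1) → ℝ} (hx : IsHyp n x) : hdist n x x = 0 := by
  unfold hdist; rw [hx.1]
  norm_num [acosh]

lemma hdist_eq_zero_imp {x y : Fin (n+1) → ℝ} (hx : IsHyp n x) (hy : IsHyp n y)
    (h : hdist n x y = 0) : x = y := by
  have hc : Real.cosh (hdist n x y) = 1 := by rw [h, Real.cosh_zero]
  rw [cosh_hdist hx hy] at hc
  have hm : mink n x y = -1 := by linarith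
  have htan : mink n x (y - x) = 0 := by rw [mink_sub_right, hm, hx.1]; ring
  have hvv : mink n (y - x) (y - x) = 0 := by
    rw [mink_sub_left, mink_sub_right, mink_sub_right, hx.1, hy.1, hm, mink_comm y x, hm]; ring
  have h0 : y - x = 0 := tang_eq_zero hx htan hvv
  exact (sub_eq_zero.1 h0).symm

lemma hdist_pos {x y : Fin (n+1) → ℝ} (hx : IsHyp n x) (hy : IsHyp n y) (hne : y ≠ x) :
    0 < hdist n x y := by
  rcases eq_or_lt_of_le (hdist_nonneg hx hy) with h | h
  · exact absurd (hdist_eq_zero_imp hx hy h.symm).symm hne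
  · exact h

lemma sinh_hdist_pos {x y : Fin (n+1) → ℝ} (hx : IsHyp n x) (hy : IsHyp n y) (hne : y ≠ x) :
    0 < Real.sinh (hdist n x y) := by
  rw [Real.sinh_pos_iff]; exact hdist_pos hx hy hne

lemma mink_hdir_base (x y : Fin (n+1) → ℝ) (hx : IsHyp n x) : mink n x (hdir n x y) = 0 := by
  unfold hdir
  rw [mink_smul_right, mink_add_right, mink_smul_right, hx.1]; ring

lemma hyp_decomp {x y : Fin (n+1) → ℝ} (hx : IsHyp n x) (hy : IsHyp n y) :
    y = Real.cosh (hdist n x y) • x + Real.sinh (hdist n x y) • hdir n x y := by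
  rcases eq_or_ne y x with rfl | hne
  · rw [hdist_self hx]
    unfold hdir
    rw [hdist_self hx]
    funext i
    simp [hx.1]
  · have hs := sinh_hdist_pos hx hy hne
    unfold hdir
    rw [smul_smul, mul_inv_cancel₀ (ne_of_gt hs), one_smul, cosh_hdist hx hy]
    funext i
    simp only [Pi.add_apply, Pi.smul_apply, smul_eq_mul]
    ring

lemma hdir_unit {x y : Fin (n+1) → ℝ} (hx : IsHyp n x) (hy : IsHyp n y) (hne : y ≠ x) :
    mink n (hdir n x y) (hdir n x y) = 1 := by
  have hs := sinh_hdist_pos hx hy hne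
  have hc := cosh_hdist hx hy
  have hsq : Real.sinh (hdist n x y) ^ 2 = (mink n x y)^2 - 1 := by
    have h1 := Real.cosh_sq_sub_sinh_sq (hdist n x y)
    have h2 : Real.cosh (hdist n x y) ^ 2 = (mink n x y)^2 := by rw [hc]; ring
    linarith
  unfold hdir
  simp only [mink_smul_left, mink_smul_right, mink_add_left, mink_add_right,
    mink_comm y x, hx.1, hy.1]
  have hs0 : Real.sinh (hdist n x y) ≠ 0 := ne_of_gt hs
  field_simp
  nlinarith [hsq]

lemma hdir_sq_le_one {x y : Fin (n+1) → ℝ} (hx : IsHyp n x) (hy : IsHyp n y) :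
    0 ≤ mink n (hdir n x y) (hdir n x y) ∧ mink n (hdir n x y) (hdir n x y) ≤ 1 := by
  constructor
  · exact tang_mink_self_nonneg hx (mink_hdir_base x y hx)
  · rcases eq_or_ne y x with rfl | hne
    · unfold hdir
      rw [hdist_self hx]
      have h0 : y + mink n y y • y = 0 := by
        funext i; simp [hy.1]
      rw [h0]
      simp [mink]
    · rw [hdir_unit hx hy hne]

lemma mink_prod_bound {x y z : Fin (n+1) → ℝ} (hx : IsHyp n x) (hy : IsHyp n y) (hz : IsHyp n z) :
    |mink n y z + mink n x y * mink n x z|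
      ≤ Real.sinh (hdist n x y) * Real.sinh (hdist n x z) := by
  set u := hdir n x y
  set v := hdir n x z
  have hdy := hyp_decomp hx hy
  have hdz := hyp_decomp hx hz
  have huv : (mink n u v)^2 ≤ 1 := by
    have := tang_cs hx (mink_hdir_base x y hx) (mink_hdir_base x z hx)
    have h1 := hdir_sq_le_one hx hy
    have h2 := hdir_sq_le_one hx hz
    nlinarith [this, h1.1, h1.2, h2.1, h2.2]
  have hkey : mink n y z = -(Real.cosh (hdist n x y) * Real.cosh (hdist n x z))
      + Real.sinh (hdist n x y) * Real.sinh (hdist n x z) * mink n u v := by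
    conv_lhs => rw [hdy, hdz]
    simp only [mink_add_left, mink_add_right, mink_smul_left, mink_smul_right,
      mink_comm (hdir n x y) x, mink_hdir_base x y hx, mink_hdir_base x z hx, hx.1]
    ring
  rw [hkey, cosh_hdist hx hy, cosh_hdist hx hz]
  have hsy := sinh_hdist_nonneg hx hy
  have hsz := sinh_hdist_nonneg hx hz
  have habs : |mink n u v| ≤ 1 := by
    rw [← Real.sqrt_one, ← Real.sqrt_sq_eq_abs]
    exact Real.sqrt_le_sqrt huv
  have heq : (-(-(mink n x y) * -(mink n x z)) + Real.sinh (hdist n x y) * Real.sinh (hdist n x z) * mink n u v) + mink n x y * mink n x z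
      = Real.sinh (hdist n x y) * Real.sinh (hdist n x z) * mink n u v := by ring
  rw [heq, abs_mul, abs_of_nonneg (mul_nonneg hsy hsz)]
  calc Real.sinh (hdist n x y) * Real.sinh (hdist n x z) * |mink n u v|
      ≤ Real.sinh (hdist n x y) * Real.sinh (hdist n x z) * 1 :=
        mul_le_mul_of_nonneg_left habs (mul_nonneg hsy hsz)
    _ = _ := mul_one _

lemma hdist_triangle {x y z : Fin (n+1) → ℝ} (hx : IsHyp n x) (hy : IsHyp n y) (hz : IsHyp n z) :
    hdist n y z ≤ hdist n x y + hdist n x z := by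
  have hb := mink_prod_bound hx hy hz
  have h1 : -(mink n y z) ≤ Real.cosh (hdist n x y + hdist n x z) := by
    rw [Real.cosh_add, cosh_hdist hx hy, cosh_hdist hx hz]
    have := abs_le.1 hb
    nlinarith [this.1, this.2]
  have h2 : hdist n y z ≤ acosh (Real.cosh (hdist n x y + hdist n x z)) :=
    acosh_le_acosh (neg_mink_ge_one hy hz) h1
  rwa [acosh_cosh (add_nonneg (hdist_nonneg hx hy) (hdist_nonneg hx hz))] at h2

lemma mink_hlog (x y w : Fin (n+1) → ℝ) : mink n (hlog n x y) w
    = hdist n x y * (Real.sinh (hdist n x y))⁻¹ * (mink n y w + mink n x y * mink n x w) := by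
  unfold hlog hdir
  rw [mink_smul_left, mink_smul_left, mink_add_left, mink_smul_left]; ring

end hdist_facts

section oneD
open Real

/-- `acosh` has derivative `1/√(x²-1)` at points `x > 1`. -/
lemma hasDerivAt_acosh {x : ℝ} (hx : 1 < x) :
    HasDerivAt acosh (1 / Real.sqrt (x^2 - 1)) x := by
  have hs : 0 < Real.sqrt (x^2-1) := Real.sqrt_pos.2 (by nlinarith)
  have hsq : Real.sqrt (x^2-1) ^ 2 = x^2 - 1 := Real.sq_sqrt (by nlinarith)
  have h1 : HasDerivAt (fun y : ℝ => y^2 - 1) (2*x) x := by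
    simpa using ((hasDerivAt_pow 2 x).sub_const 1)
  have h2 : HasDerivAt (fun y : ℝ => Real.sqrt (y^2 - 1)) (2*x / (2 * Real.sqrt (x^2-1))) x :=
    (Real.hasDerivAt_sqrt (by nlinarith)).comp x h1 |>.congr_deriv (by ring)
  have h3 : HasDerivAt (fun y : ℝ => y + Real.sqrt (y^2-1))
      (1 + 2*x / (2*Real.sqrt (x^2-1))) x := (hasDerivAt_id x).add h2
  have h4 : HasDerivAt (fun y : ℝ => Real.log (y + Real.sqrt (y^2-1)))
      ((1 + 2*x / (2*Real.sqrt (x^2-1))) / (x + Real.sqrt (x^2-1))) x :=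
    h3.log (by nlinarith)
  have : (1 + 2*x / (2*Real.sqrt (x^2-1))) / (x + Real.sqrt (x^2-1))
      = 1 / Real.sqrt (x^2-1) := by
    rw [div_eq_div_iff (by nlinarith) (ne_of_gt hs)]
    field_simp
    nlinarith [hsq]
  rw [← this]
  exact h4

lemma sinh_le_mul_cosh {s : ℝ} (hs : 0 ≤ s) : Real.sinh s ≤ s * Real.cosh s := by
  have hmono : MonotoneOn (fun t : ℝ => t * Real.cosh t - Real.sinh t) (Set.Ici 0) := by
    apply monotoneOn_of_deriv_nonneg (convex_Ici 0)
    · exact ((continuous_id.mul Real.continuous_cosh).sub Real.continuous_sinh).continuousOn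
    · intro t _
      exact (((hasDerivAt_id t).mul (Real.hasDerivAt_cosh t)).sub
        (Real.hasDerivAt_sinh t)).differentiableAt.differentiableWithinAt
    · intro t ht
      rw [interior_Ici, Set.mem_Ioi] at ht
      have hd : HasDerivAt (fun t : ℝ => t * Real.cosh t - Real.sinh t) (t * Real.sinh t) t :=
        (((hasDerivAt_id t).mul (Real.hasDerivAt_cosh t)).sub
          (Real.hasDerivAt_sinh t)).congr_deriv (by simp only [id_eq]; ring)
      rw [hd.deriv]
      exact mul_nonneg (le_of_lt ht) (by rw [Real.sinh_nonneg_iff]; exact le_of_lt ht)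
  have := hmono (Set.self_mem_Ici) (Set.mem_Ici.2 hs) hs
  simpa using this

/-- the function `t ↦ φ(t)·φ'(t)` where `φ(t) = acosh (A cosh t + B sinh t)`. -/
def Gfun (A B t : ℝ) : ℝ :=
  acosh (A * Real.cosh t + B * Real.sinh t) * (A * Real.sinh t + B * Real.cosh t)
    / Real.sqrt ((A * Real.cosh t + B * Real.sinh t)^2 - 1)

lemma G_of_cosh (s : ℝ) :
    acosh (Real.cosh s) * Real.sinh s / Real.sqrt ((Real.cosh s)^2 - 1) = s := by
  have h1 : Real.cosh s ^2 - 1 = Real.sinh s ^ 2 := by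
    have := Real.cosh_sq_sub_sinh_sq s; linarith
  have h2 : acosh (Real.cosh s) = |s| := by
    rw [← Real.cosh_abs]; exact acosh_cosh (abs_nonneg s)
  rw [h1, Real.sqrt_sq_eq_abs, h2, Real.abs_sinh]
  rcases lt_trichotomy s 0 with h | h | h
  · have hsne : Real.sinh s ≠ 0 := by rw [Ne, Real.sinh_eq_zero]; exact ne_of_lt h
    rw [abs_of_neg h, Real.sinh_neg, div_neg, mul_div_assoc, div_self hsne]
    ring
  · simp [h]
  · have hsne : Real.sinh s ≠ 0 := by rw [Ne, Real.sinh_eq_zero]; exact ne_of_gt h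
    rw [abs_of_pos h, mul_div_assoc, div_self hsne, mul_one]

end oneD

section oneD2
open Real

lemma F_identity (A B t : ℝ) :
    (A * Real.cosh t + B * Real.sinh t)^2 - (A * Real.sinh t + B * Real.cosh t)^2
      = A^2 - B^2 := by
  have hid := Real.cosh_sq_sub_sinh_sq t
  nlinarith [hid]

lemma F_pos {A B : ℝ} (hA : 1 ≤ A) (hK : 1 ≤ A^2 - B^2) (t : ℝ) :
    0 < A * Real.cosh t + B * Real.sinh t := by
  have hcosh : 0 < Real.cosh t := Real.cosh_pos t
  have habs : |Real.sinh t| < Real.cosh t := by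
    nlinarith [Real.cosh_sq_sub_sinh_sq t, abs_nonneg (Real.sinh t), sq_abs (Real.sinh t)]
  have hAB : |B| < A := by nlinarith [abs_nonneg B, sq_abs B]
  have h1 : -(B * Real.sinh t) ≤ |B| * |Real.sinh t| := by
    rw [← abs_mul]; exact neg_le_abs _
  have h2 : |B| * |Real.sinh t| < A * Real.cosh t := by
    rcases eq_or_lt_of_le (abs_nonneg B) with hB0 | hB0
    · rw [← hB0, zero_mul]; exact mul_pos (by linarith) (Real.cosh_pos t)
    · calc |B| * |Real.sinh t| ≤ |B| * Real.cosh t :=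
          mul_le_mul_of_nonneg_left (le_of_lt habs) (abs_nonneg B)
        _ < A * Real.cosh t := by exact mul_lt_mul_of_pos_right hAB hcosh
  linarith

lemma F_gt_one {A B : ℝ} (hA : 1 ≤ A) (hK : 1 < A^2 - B^2) (t : ℝ) :
    1 < A * Real.cosh t + B * Real.sinh t := by
  have h0 := F_pos hA (le_of_lt hK) t
  have hid := F_identity A B t
  nlinarith [sq_nonneg (A * Real.sinh t + B * Real.cosh t)]

lemma Gfun_hasDeriv {A B : ℝ} (hA : 1 ≤ A) (hK : 1 < A^2 - B^2) (t : ℝ) :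
    ∃ d : ℝ, HasDerivAt (Gfun A B) d t ∧ 1 ≤ d := by
  set F := A * Real.cosh t + B * Real.sinh t with hFdef
  set F' := A * Real.sinh t + B * Real.cosh t with hF'def
  have hF1 : 1 < F := F_gt_one hA hK t
  have hid : F^2 - F'^2 = A^2 - B^2 := F_identity A B t
  have hS2 : 0 < F^2 - 1 := by nlinarith
  set S := Real.sqrt (F^2 - 1) with hSdef
  have hS : 0 < S := Real.sqrt_pos.2 hS2
  have hSsq : S^2 = F^2 - 1 := Real.sq_sqrt (le_of_lt hS2)
  set φ := acosh F with hφdef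
  have hφ : 0 ≤ φ := acosh_nonneg (le_of_lt hF1)
  have hcoshφ : Real.cosh φ = F := cosh_acosh (le_of_lt hF1)
  have hsinhφ : Real.sinh φ = S := sinh_acosh (le_of_lt hF1)
  have key : S ≤ φ * F := by
    have := sinh_le_mul_cosh hφ
    rwa [hsinhφ, hcoshφ] at this
  -- derivatives
  have dF : HasDerivAt (fun u => A * Real.cosh u + B * Real.sinh u) F' t := by
    exact ((Real.hasDerivAt_cosh t).const_mul A).add ((Real.hasDerivAt_sinh t).const_mul B)
  have dF' : HasDerivAt (fun u => A * Real.sinh u + B * Real.cosh u) F t := by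
    exact ((Real.hasDerivAt_sinh t).const_mul A).add ((Real.hasDerivAt_cosh t).const_mul B)
  have dphi : HasDerivAt (fun u => acosh (A * Real.cosh u + B * Real.sinh u)) (F'/S) t := by
    have := (hasDerivAt_acosh hF1).comp t dF
    exact this.congr_deriv (by rw [one_div]; ring)
  have dSq : HasDerivAt (fun u => (A * Real.cosh u + B * Real.sinh u)^2 - 1) (2*F*F') t := by
    have := ((dF.pow 2).sub_const 1)
    exact this.congr_deriv (by ring)
  have dS : HasDerivAt (fun u => Real.sqrt ((A * Real.cosh u + B * Real.sinh u)^2 - 1))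
      (F*F'/S) t := by
    have := (Real.hasDerivAt_sqrt (ne_of_gt hS2)).comp t dSq
    exact this.congr_deriv (by field_simp; ring)
  have dnum : HasDerivAt
      (fun u => acosh (A * Real.cosh u + B * Real.sinh u) * (A * Real.sinh u + B * Real.cosh u))
      (F'/S * F' + φ * F) t := dphi.mul dF'
  have dG : HasDerivAt (Gfun A B)
      (((F'/S * F' + φ * F) * S - (φ * F') * (F*F'/S)) / S^2) t := by
    exact dnum.div dS (ne_of_gt hS)
  refine ⟨_, dG, ?_⟩
  have hrw : ((F'/S * F' + φ * F) * S - (φ * F') * (F*F'/S)) / S^2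
      = (F'^2 * S + φ * F * ((A^2-B^2) - 1)) / S^3 := by
    rw [div_eq_div_iff (by positivity) (by positivity)]
    have hD : F^2 - 1 - F'^2 = (A^2 - B^2) - 1 := by linarith
    have hinv : S * S⁻¹ = 1 := mul_inv_cancel₀ (ne_of_gt hS)
    linear_combination (F'^2*S^3 - φ*F*F'^2*S^2) * hinv + (φ*F*S^2) * hSsq + (φ*F*S^2) * hD
  rw [hrw]
  rw [le_div_iff₀ (by positivity), one_mul]
  have hcube : S^3 = F'^2 * S + S * ((A^2-B^2) - 1) := by
    have h3 : S^3 = S * S^2 := by ring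
    rw [h3, hSsq]
    have : F^2 - 1 = F'^2 + ((A^2-B^2) - 1) := by linarith
    rw [this]; ring
  rw [hcube]
  have : S * ((A^2-B^2) - 1) ≤ φ * F * ((A^2-B^2) - 1) :=
    mul_le_mul_of_nonneg_right key (by linarith)
  linarith

lemma Gfun_ge {A B : ℝ} (hA : 1 ≤ A) (hK : 1 ≤ A^2 - B^2) {c : ℝ} (hc : 0 ≤ c) :
    c ≤ Gfun A B c - Gfun A B 0 := by
  rcases eq_or_lt_of_le hK with hK1 | hK1
  · -- degenerate case A² - B² = 1
    set σ := acosh A with hσdef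
    have hA2 : Real.cosh σ = A := cosh_acosh hA
    have hsσ : Real.sinh σ = |B| := by
      rw [sinh_acosh hA, ← Real.sqrt_sq_eq_abs]
      congr 1; linarith
    rcases le_or_gt 0 B with hB | hB
    · have hBσ : Real.sinh σ = B := by rw [hsσ, abs_of_nonneg hB]
      have hGt : ∀ t : ℝ, Gfun A B t = t + σ := by
        intro t
        have e1 : A * Real.cosh t + B * Real.sinh t = Real.cosh (t + σ) := by
          rw [Real.cosh_add, ← hA2, ← hBσ]; ring
        have e2 : A * Real.sinh t + B * Real.cosh t = Real.sinh (t + σ) := by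
          rw [Real.sinh_add, ← hA2, ← hBσ]; ring
        unfold Gfun
        rw [e1, e2]
        exact G_of_cosh (t + σ)
      rw [hGt c, hGt 0]; linarith
    · have hBσ : Real.sinh σ = -B := by rw [hsσ, abs_of_neg hB]
      have hGt : ∀ t : ℝ, Gfun A B t = t - σ := by
        intro t
        have e1 : A * Real.cosh t + B * Real.sinh t = Real.cosh (t - σ) := by
          rw [Real.cosh_sub, ← hA2, hBσ]; ring
        have e2 : A * Real.sinh t + B * Real.cosh t = Real.sinh (t - σ) := by
          rw [Real.sinh_sub, ← hA2, hBσ]; ring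
        unfold Gfun
        rw [e1, e2]
        exact G_of_cosh (t - σ)
      rw [hGt c, hGt 0]; linarith
  · -- strict case
    have mono : MonotoneOn (fun t => Gfun A B t - t) (Set.Icc 0 c) := by
      apply monotoneOn_of_deriv_nonneg (convex_Icc 0 c)
      · intro t _
        obtain ⟨d, hd, -⟩ := Gfun_hasDeriv hA hK1 t
        exact ((hd.sub (hasDerivAt_id t)).differentiableAt).continuousAt.continuousWithinAt
      · intro t _
        obtain ⟨d, hd, -⟩ := Gfun_hasDeriv hA hK1 t
        exact ((hd.sub (hasDerivAt_id t)).differentiableAt).differentiableWithinAt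
      · intro t _
        obtain ⟨d, hd, hd1⟩ := Gfun_hasDeriv hA hK1 t
        have : HasDerivAt (fun t => Gfun A B t - t) (d - 1) t := by
          exact hd.sub (hasDerivAt_id t)
        rw [this.deriv]; linarith
    have h01 : (0:ℝ) ∈ Set.Icc 0 c := ⟨le_refl 0, hc⟩
    have h02 : c ∈ Set.Icc (0:ℝ) c := ⟨hc, le_refl c⟩
    have := mono h01 h02 hc
    simp only at this
    linarith

end oneD2

section pointwise
variable {n : ℕ}

lemma mink_zero_right (x : Fin (n+1) → ℝ) : mink n x 0 = 0 := by
  unfold mink; simp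

lemma hlog_self {p : Fin (n+1) → ℝ} (hp : IsHyp n p) : hlog n p p = 0 := by
  unfold hlog; rw [hdist_self hp, zero_smul]

lemma mink_base_hlog (x y : Fin (n+1) → ℝ) (hx : IsHyp n x) : mink n x (hlog n x y) = 0 := by
  unfold hlog
  rw [mink_smul_right, mink_hdir_base _ _ hx, mul_zero]

/-- The key comparison inequality: strong convexity of ½d² on the hyperboloid. -/
lemma pointwise_key {p q x : Fin (n+1) → ℝ} (hp : IsHyp n p) (hq : IsHyp n q)
    (hx : IsHyp n x) :
    (hdist n p q)^2 ≤ mink n (hlog n p x) (hlog n p q) + mink n (hlog n q x) (hlog n q p) := by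
  rcases eq_or_ne q p with rfl | hne
  · rw [hdist_self hp, hlog_self hp]
    simp [mink_zero_right]
  · set c := hdist n p q with hcdef
    have hc : 0 ≤ c := hdist_nonneg hp hq
    have hsc : 0 < Real.sinh c := sinh_hdist_pos hp hq hne
    have hcoshc : Real.cosh c = -(mink n p q) := cosh_hdist hp hq
    set A := -(mink n p x) with hAdef
    set B := (-(mink n q x) - mink n p x * mink n p q) * (Real.sinh c)⁻¹ with hBdef
    have hA : 1 ≤ A := neg_mink_ge_one hp hx
    have hax : 1 ≤ -(mink n q x) := neg_mink_ge_one hq hx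
    have hbnd := mink_prod_bound hp hx hq
    have hsinhb : Real.sinh (hdist n p x) = Real.sqrt (A^2 - 1) := by
      have h : hdist n p x = acosh A := rfl
      rw [h, sinh_acosh hA]
    have hsinha : Real.sinh (hdist n q x) = Real.sqrt ((-(mink n q x))^2 - 1) := by
      have h : hdist n q x = acosh (-(mink n q x)) := rfl
      rw [h, sinh_acosh hax]
    have hK : 1 ≤ A^2 - B^2 := by
      have hsq : Real.sinh (hdist n p x) ^ 2 = A^2 - 1 := by
        rw [hsinhb, Real.sq_sqrt (by nlinarith)]
      have h1 : |mink n x q + mink n p x * mink n p q|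
          ≤ Real.sinh (hdist n p x) * Real.sinh c := hbnd
      have h2 : B = -(mink n x q + mink n p x * mink n p q) * (Real.sinh c)⁻¹ := by
        rw [hBdef, mink_comm x q]; ring
      have h3 : |B| ≤ Real.sinh (hdist n p x) := by
        rw [h2, abs_mul, abs_neg, abs_of_pos (inv_pos.2 hsc), ← div_eq_mul_inv]
        exact (div_le_iff₀ hsc).2 h1
      have hB2 : B^2 ≤ Real.sinh (hdist n p x) ^ 2 := by
        nlinarith [h3, abs_nonneg B, sq_abs B]
      linarith
    have main := Gfun_ge hA hK hc
    have hG0 : mink n (hlog n p x) (hlog n p q) = -c * Gfun A B 0 := by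
      have e1 : mink n (hlog n p x) (hlog n p q)
          = hdist n p x * (Real.sinh (hdist n p x))⁻¹
            * (mink n x (hlog n p q) + mink n p x * 0) := by
        rw [mink_hlog, mink_base_hlog _ _ hp]
      have e2 : mink n x (hlog n p q) = mink n (hlog n p q) x := mink_comm _ _
      have e3 : mink n (hlog n p q) x
          = c * (Real.sinh c)⁻¹ * (mink n q x + mink n p q * mink n p x) := mink_hlog p q x
      have e4 : Gfun A B 0 = acosh A * B / Real.sqrt (A^2-1) := by
        unfold Gfun
        rw [Real.cosh_zero, Real.sinh_zero]
        norm_num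
      have e6 : acosh A = hdist n p x := rfl
      rw [e1, e2, e3, e4, ← hsinhb, e6, hBdef]
      field_simp
      ring
    have hFc : A * Real.cosh c + B * Real.sinh c = -(mink n q x) := by
      rw [hBdef, hAdef, hcoshc]
      field_simp
      ring
    have hGc : mink n (hlog n q x) (hlog n q p) = c * Gfun A B c := by
      have e1 : mink n (hlog n q x) (hlog n q p)
          = hdist n q x * (Real.sinh (hdist n q x))⁻¹
            * (mink n x (hlog n q p) + mink n q x * 0) := by
        rw [mink_hlog, mink_base_hlog _ _ hq]
      have e2 : mink n x (hlog n q p) = mink n (hlog n q p) x := mink_comm _ _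
      have e3 : mink n (hlog n q p) x
          = hdist n q p * (Real.sinh (hdist n q p))⁻¹
            * (mink n p x + mink n q p * mink n q x) := mink_hlog q p x
      have e7 : hdist n q p = c := hdist_comm q p
      have e4 : Gfun A B c = acosh (-(mink n q x)) * (A * Real.sinh c + B * Real.cosh c)
          / Real.sqrt ((-(mink n q x))^2 - 1) := by
        unfold Gfun
        rw [hFc]
      have e6 : acosh (-(mink n q x)) = hdist n q x := rfl
      rw [e1, e2, e3, e7, e4, ← hsinha, e6, hBdef]
      have hmqp : mink n q p = mink n p q := mink_comm q p
      rw [hmqp, hAdef, hcoshc]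
      have hs2 : Real.sinh c ^ 2 = (mink n p q)^2 - 1 := by
        have h1 := Real.cosh_sq_sub_sinh_sq c
        have h2 : Real.cosh c ^ 2 = (mink n p q)^2 := by rw [hcoshc]; ring
        linarith
      have hinv : Real.sinh c * (Real.sinh c)⁻¹ = 1 := mul_inv_cancel₀ (ne_of_gt hsc)
      linear_combination ((hdist n q x) * c * (Real.sinh (hdist n q x))⁻¹ * mink n p x
          * (Real.sinh c)⁻¹) * hs2
        + (-(hdist n q x) * c * (Real.sinh (hdist n q x))⁻¹ * mink n p x * Real.sinh c) * hinv
    rw [hG0, hGc]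
    nlinarith [main, hc]

end pointwise

section pointwise2
variable {n : ℕ}

lemma hdist_mul_inv_sinh_le_one (d : ℝ) (hd : 0 ≤ d) : d * (Real.sinh d)⁻¹ ≤ 1 := by
  rcases eq_or_lt_of_le hd with h0 | h0
  · simp [← h0]
  · have hs : 0 < Real.sinh d := by rwa [Real.sinh_pos_iff]
    rw [← div_eq_mul_inv, div_le_one hs]
    rwa [Real.self_le_sinh_iff]

lemma hdist_mul_inv_sinh_nonneg (d : ℝ) (hd : 0 ≤ d) : 0 ≤ d * (Real.sinh d)⁻¹ :=
  mul_nonneg hd (inv_nonneg.2 (by rwa [Real.sinh_nonneg_iff]))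

/-- CS-type bound: `|⟨log_q y, log_q p⟩| ≤ d(q,y)·d(q,p)`. -/
lemma mink_hlog_le {q y p : Fin (n+1) → ℝ} (hq : IsHyp n q) (hy : IsHyp n y) (hp : IsHyp n p) :
    |mink n (hlog n q y) (hlog n q p)| ≤ hdist n q y * hdist n q p := by
  have e1 : mink n (hlog n q y) (hlog n q p)
      = hdist n q y * (Real.sinh (hdist n q y))⁻¹
        * (mink n (hlog n q p) y + mink n q y * 0) := by
    rw [mink_hlog, mink_base_hlog _ _ hq, mink_comm y (hlog n q p)]
  rw [mink_hlog q p y] at e1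
  have hbnd := mink_prod_bound hq hp hy
  have ha := hdist_nonneg hq hy
  have hc := hdist_nonneg hq hp
  have h1 := hdist_mul_inv_sinh_le_one (hdist n q y) ha
  have h2 := hdist_mul_inv_sinh_le_one (hdist n q p) hc
  have h1' := hdist_mul_inv_sinh_nonneg (hdist n q y) ha
  have h2' := hdist_mul_inv_sinh_nonneg (hdist n q p) hc
  rw [e1]
  rcases eq_or_lt_of_le ha with ha0 | ha0
  · rw [← ha0]; simp
  rcases eq_or_lt_of_le hc with hc0 | hc0
  · rw [← hc0]; simp
  have hsy : 0 < Real.sinh (hdist n q y) := by rwa [Real.sinh_pos_iff]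
  have hsp : 0 < Real.sinh (hdist n q p) := by rwa [Real.sinh_pos_iff]
  have key : |mink n p y + mink n q p * mink n q y|
      ≤ Real.sinh (hdist n q p) * Real.sinh (hdist n q y) := hbnd
  have expand : hdist n q y * (Real.sinh (hdist n q y))⁻¹
        * (hdist n q p * (Real.sinh (hdist n q p))⁻¹ * (mink n p y + mink n q p * mink n q y)
          + mink n q y * 0)
      = (hdist n q y * (Real.sinh (hdist n q y))⁻¹) * (hdist n q p * (Real.sinh (hdist n q p))⁻¹)
        * (mink n p y + mink n q p * mink n q y) := by ring
  rw [expand, abs_mul, abs_mul, abs_of_nonneg h1', abs_of_nonneg h2']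
  calc hdist n q y * (Real.sinh (hdist n q y))⁻¹ * (hdist n q p * (Real.sinh (hdist n q p))⁻¹)
        * |mink n p y + mink n q p * mink n q y|
      ≤ (hdist n q y * (Real.sinh (hdist n q y))⁻¹)
        * (hdist n q p * (Real.sinh (hdist n q p))⁻¹)
        * (Real.sinh (hdist n q p) * Real.sinh (hdist n q y)) := by
        apply mul_le_mul_of_nonneg_left key (mul_nonneg h1' h2')
    _ = (hdist n q y * ((Real.sinh (hdist n q y))⁻¹ * Real.sinh (hdist n q y)))
        * (hdist n q p * ((Real.sinh (hdist n q p))⁻¹ * Real.sinh (hdist n q p))) := by ring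
    _ = hdist n q y * hdist n q p := by
        rw [inv_mul_cancel₀ (ne_of_gt hsy), inv_mul_cancel₀ (ne_of_gt hsp)]; ring

/-- Sign lemma used to show the cosh-center lies in the support ball. -/
lemma mink_hlog_sign {q c y : Fin (n+1) → ℝ} (hq : IsHyp n q) (hc : IsHyp n c)
    (hy : IsHyp n y) (hlt : hdist n c y < hdist n q c) :
    0 ≤ mink n (hlog n q y) (hlog n q c) ∧
      (mink n (hlog n q y) (hlog n q c) = 0 → y = q) := by
  have e1 : mink n (hlog n q y) (hlog n q c)
      = hdist n q y * (Real.sinh (hdist n q y))⁻¹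
        * (mink n (hlog n q c) y + mink n q y * 0) := by
    rw [mink_hlog, mink_base_hlog _ _ hq, mink_comm y (hlog n q c)]
  rw [mink_hlog q c y] at e1
  have ha := hdist_nonneg hq hy
  have ht0 : 0 ≤ hdist n c y := hdist_nonneg hc hy
  have htpos : 0 < hdist n q c := lt_of_le_of_lt ht0 hlt
  have hst : 0 < Real.sinh (hdist n q c) := by rwa [Real.sinh_pos_iff]
  -- the inner factor: mink c y + mink q c * mink q y = cosh t cosh a - cosh s > 0
  have hcy : Real.cosh (hdist n c y) = -(mink n c y) := cosh_hdist hc hy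
  have hqc : Real.cosh (hdist n q c) = -(mink n q c) := cosh_hdist hq hc
  have hqy : Real.cosh (hdist n q y) = -(mink n q y) := cosh_hdist hq hy
  have hinner : 0 < mink n c y + mink n q c * mink n q y := by
    have h1 : Real.cosh (hdist n c y) < Real.cosh (hdist n q c) := by
      rw [Real.cosh_lt_cosh, abs_of_nonneg ht0, abs_of_nonneg (le_of_lt htpos)]
      exact hlt
    have h2 : 1 ≤ Real.cosh (hdist n q y) := Real.one_le_cosh _
    have h3 : Real.cosh (hdist n q c) * 1 ≤ Real.cosh (hdist n q c) * Real.cosh (hdist n q y) :=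
      mul_le_mul_of_nonneg_left h2 (by positivity)
    have : mink n c y + mink n q c * mink n q y
        = Real.cosh (hdist n q c) * Real.cosh (hdist n q y) - Real.cosh (hdist n c y) := by
      rw [hcy, hqc, hqy]; ring
    rw [this]; linarith
  constructor
  · rw [e1]
    have hfac : 0 ≤ hdist n q c * (Real.sinh (hdist n q c))⁻¹ * (mink n c y + mink n q c * mink n q y) + mink n q y * 0 := by
      have := hdist_mul_inv_sinh_nonneg (hdist n q c) (le_of_lt htpos)
      nlinarith [hinner]
    exact mul_nonneg (hdist_mul_inv_sinh_nonneg _ ha) hfac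
  · intro h0
    rw [e1] at h0
    have hfac : 0 < hdist n q c * (Real.sinh (hdist n q c))⁻¹ * (mink n c y + mink n q c * mink n q y) + mink n q y * 0 := by
      have hpos : 0 < hdist n q c * (Real.sinh (hdist n q c))⁻¹ :=
        mul_pos htpos (inv_pos.2 hst)
      nlinarith [hinner]
    have ha0 : hdist n q y * (Real.sinh (hdist n q y))⁻¹ = 0 := by
      rcases mul_eq_zero.1 h0 with h | h
      · exact h
      · exact absurd h (ne_of_gt hfac)
    have : hdist n q y = 0 := by
      rcases mul_eq_zero.1 ha0 with h | h
      · exact h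
      · rcases eq_or_lt_of_le ha with h' | h'
        · exact h'.symm
        · exact absurd h (by
            have : 0 < Real.sinh (hdist n q y) := by rwa [Real.sinh_pos_iff]
            exact inv_ne_zero (ne_of_gt this))
    exact (hdist_eq_zero_imp hq hy this).symm

lemma sinhc_ge_one {x : ℝ} (hx : 0 ≤ x) : 1 ≤ sinhc x := by
  unfold sinhc
  rcases eq_or_lt_of_le hx with h0 | h0
  · simp [← h0]
  · rw [if_neg (ne_of_gt h0), le_div_iff₀ h0, one_mul]
    rwa [Real.self_le_sinh_iff]

lemma sinhc_le_cosh {x : ℝ} (hx : 0 ≤ x) : sinhc x ≤ Real.cosh x := by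
  unfold sinhc
  rcases eq_or_lt_of_le hx with h0 | h0
  · simp [← h0]
  · rw [if_neg (ne_of_gt h0), div_le_iff₀ h0]
    have := sinh_le_mul_cosh hx
    linarith

lemma sinhc_mul_self (x : ℝ) : x * (sinhc x - 1) = Real.sinh x - x := by
  unfold sinhc
  rcases eq_or_ne x 0 with h0 | h0
  · simp [h0]
  · rw [if_neg h0]; field_simp

lemma sinh_sub_mono {a b : ℝ} (ha : 0 ≤ a) (hab : a ≤ b) :
    Real.sinh a - a ≤ Real.sinh b - b :=
  Real.sinh_sub_id_strictMono.monotone hab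

end pointwise2

section measurestuff
open MeasureTheory
variable {n : ℕ}

lemma measurable_mink_right (z : Fin (n+1) → ℝ) :
    Measurable (fun y : Fin (n+1) → ℝ => mink n z y) := by
  unfold mink
  apply Measurable.sub
  · exact Finset.measurable_sum _ fun i _ => (measurable_pi_apply _).const_mul _
  · exact (measurable_pi_apply _).const_mul _

lemma measurable_acosh : Measurable acosh := by
  unfold acosh
  exact Real.measurable_log.comp
    (measurable_id.add (((measurable_id.pow_const 2).sub measurable_const).sqrt))

lemma measurable_hdist (z : Fin (n+1) → ℝ) :
    Measurable (fun y : Fin (n+1) → ℝ => hdist n z y) := by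
  unfold hdist
  exact measurable_acosh.comp (measurable_mink_right z).neg

lemma measurable_hlog (z : Fin (n+1) → ℝ) :
    Measurable (fun y : Fin (n+1) → ℝ => hlog n z y) := by
  rw [measurable_pi_iff]
  intro i
  have : (fun y : Fin (n+1) → ℝ => hlog n z y i)
      = fun y => hdist n z y * ((Real.sinh (hdist n z y))⁻¹ * (y i + mink n z y * z i)) := by
    funext y; simp only [hlog, hdir, Pi.smul_apply, Pi.add_apply, smul_eq_mul]; try ring
  rw [this]
  exact (measurable_hdist z).mul
    (((Real.measurable_sinh.comp (measurable_hdist z)).inv).mul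
      ((measurable_pi_apply i).add ((measurable_mink_right z).mul measurable_const)))

lemma measurable_sinhc : Measurable sinhc := by
  unfold sinhc
  refine Measurable.ite (measurableSet_eq_fun measurable_id measurable_const) measurable_const ?_
  exact Real.measurable_sinh.div measurable_id

/-- base point of the hyperboloid -/
def hypE (n : ℕ) : Fin (n+1) → ℝ := fun i => if i = Fin.last n then 1 else 0

lemma hypE_isHyp : IsHyp n (hypE n) := by
  constructor
  · unfold mink hypE
    have h1 : ∀ i : Fin n, (if (i.castSucc : Fin (n+1)) = Fin.last n then (1:ℝ) else 0) = 0 := by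
      intro i
      rw [if_neg (Fin.castSucc_lt_last i).ne]
    simp [h1]
  · unfold hypE; simp

lemma mink_hypE (y : Fin (n+1) → ℝ) : mink n (hypE n) y = -(y (Fin.last n)) := by
  unfold mink hypE
  have h1 : ∀ i : Fin n, (if (i.castSucc : Fin (n+1)) = Fin.last n then (1:ℝ) else 0)
      * y i.castSucc = 0 := by
    intro i; rw [if_neg (Fin.castSucc_lt_last i).ne, zero_mul]
  rw [Finset.sum_congr rfl fun i _ => h1 i]
  simp

lemma hyp_coord_bound {y : Fin (n+1) → ℝ} (hy : IsHyp n y) (i : Fin (n+1)) :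
    |y i| ≤ y (Fin.last n) := by
  have hy1 := hyp_last_ge_one hy
  refine Fin.lastCases ?_ (fun j => ?_) i
  · rw [abs_of_pos hy.2]
  ·
    have hm := hy.1
    unfold mink at hm
    have hsum : ∑ i : Fin n, y i.castSucc * y i.castSucc = y (Fin.last n)^2 - 1 := by
      nlinarith [hm]
    have hj : y j.castSucc * y j.castSucc ≤ y (Fin.last n)^2 - 1 := by
      rw [← hsum]
      exact Finset.single_le_sum (fun i _ => mul_self_nonneg (y i.castSucc)) (Finset.mem_univ j)
    have h2 : |y j.castSucc| ≤ |y (Fin.last n)| := by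
      rw [← Real.sqrt_sq_eq_abs, ← Real.sqrt_sq_eq_abs]
      apply Real.sqrt_le_sqrt
      nlinarith [hj]
    rwa [abs_of_pos hy.2] at h2

/-- Uniform coordinate bound for points in the ball of radius `r` around `c`. -/
lemma hyp_ball_coord_bound {y c : Fin (n+1) → ℝ} {r : ℝ} (hy : IsHyp n y) (hc : IsHyp n c)
    (hr : hdist n c y ≤ r) (i : Fin (n+1)) :
    |y i| ≤ Real.cosh (hdist n (hypE n) c + r) := by
  have h1 := hyp_coord_bound hy i
  have h2 : y (Fin.last n) = Real.cosh (hdist n (hypE n) y) := by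
    rw [cosh_hdist hypE_isHyp hy, mink_hypE, neg_neg]
  have h3 : hdist n (hypE n) y ≤ hdist n (hypE n) c + r := by
    have ht := hdist_triangle hc hypE_isHyp hy
    have : hdist n c (hypE n) = hdist n (hypE n) c := hdist_comm _ _
    linarith
  have h4 : Real.cosh (hdist n (hypE n) y) ≤ Real.cosh (hdist n (hypE n) c + r) := by
    rw [Real.cosh_le_cosh]
    have hr0 : 0 ≤ hdist n (hypE n) y := hdist_nonneg hypE_isHyp hy
    rw [abs_of_nonneg hr0, abs_of_nonneg (le_trans hr0 h3)]
    exact h3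
  linarith [h1, h2 ▸ h4]

/-- Uniform bound on `‖hlog z y‖` for `y` in the ball. -/
lemma hlog_bound {z y c : Fin (n+1) → ℝ} {r : ℝ} (hz : IsHyp n z) (hy : IsHyp n y)
    (hc : IsHyp n c) (hr : hdist n c y ≤ r) :
    ‖hlog n z y‖ ≤ Real.cosh (hdist n (hypE n) c + r)
      + Real.cosh (hdist n c z + r) * z (Fin.last n) := by
  set Y := Real.cosh (hdist n (hypE n) c + r)
  set D := Real.cosh (hdist n c z + r)
  have hY : 0 < Y := Real.cosh_pos _
  have hD : 1 ≤ D := Real.one_le_cosh _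
  have hz1 := hyp_last_ge_one hz
  have hC : (0:ℝ) ≤ Y + D * z (Fin.last n) := by positivity
  rw [pi_norm_le_iff_of_nonneg hC]
  intro i
  have hcomp : hlog n z y i
      = (hdist n z y * (Real.sinh (hdist n z y))⁻¹) * (y i + mink n z y * z i) := by
    simp only [hlog, hdir, Pi.smul_apply, Pi.add_apply, smul_eq_mul]; try ring
  rw [Real.norm_eq_abs, hcomp, abs_mul]
  have h1 : |hdist n z y * (Real.sinh (hdist n z y))⁻¹| ≤ 1 := by
    rw [abs_of_nonneg (hdist_mul_inv_sinh_nonneg _ (hdist_nonneg hz hy))]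
    exact hdist_mul_inv_sinh_le_one _ (hdist_nonneg hz hy)
  have hcoshzy : |mink n z y| ≤ D := by
    have h2 : -(mink n z y) = Real.cosh (hdist n z y) := (cosh_hdist hz hy).symm
    have h3 : hdist n z y ≤ hdist n c z + r := by
      have ht := hdist_triangle hc hz hy
      linarith
    have h4 : Real.cosh (hdist n z y) ≤ D := by
      rw [Real.cosh_le_cosh]
      have h0 : 0 ≤ hdist n z y := hdist_nonneg hz hy
      rw [abs_of_nonneg h0, abs_of_nonneg (le_trans h0 h3)]
      exact h3
    rw [abs_le]
    constructor
    · nlinarith [Real.one_le_cosh (hdist n z y)]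
    · nlinarith [Real.one_le_cosh (hdist n z y)]
  have h5 : |y i + mink n z y * z i| ≤ Y + D * z (Fin.last n) := by
    have h6 := hyp_ball_coord_bound hy hc hr i
    have h7 := hyp_coord_bound hz i
    have h8 : |mink n z y * z i| ≤ D * z (Fin.last n) := by
      rw [abs_mul]
      apply mul_le_mul hcoshzy h7 (abs_nonneg _) (by linarith)
    calc |y i + mink n z y * z i| ≤ |y i| + |mink n z y * z i| := abs_add_le _ _
      _ ≤ Y + D * z (Fin.last n) := add_le_add h6 h8
  calc |hdist n z y * (Real.sinh (hdist n z y))⁻¹| * |y i + mink n z y * z i|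
      ≤ 1 * (Y + D * z (Fin.last n)) :=
        mul_le_mul h1 h5 (abs_nonneg _) (by norm_num)
    _ = Y + D * z (Fin.last n) := one_mul _

/-- `mink (·, w)` as a continuous linear map. -/
def minkCLM (n : ℕ) (w : Fin (n+1) → ℝ) : (Fin (n+1) → ℝ) →L[ℝ] ℝ :=
  LinearMap.toContinuousLinearMap
    { toFun := fun v => mink n v w
      map_add' := fun x y => mink_add_left x y w
      map_smul' := fun t x => by simp [mink_smul_left] }

@[simp] lemma minkCLM_apply (w v : Fin (n+1) → ℝ) : minkCLM n w v = mink n v w := rfl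

end measurestuff

section main
open MeasureTheory

lemma mink_zero_left (w : Fin (n+1) → ℝ) : mink n 0 w = 0 := by
  rw [mink_comm]; exact mink_zero_right w

end main

section main2
open MeasureTheory

theorem part2 (n : ℕ) (r : ℝ) (hr : 0 < r)
    (μ : Measure (Fin (n+1) → ℝ)) (hμ : IsProbabilityMeasure μ)
    (c p q : Fin (n+1) → ℝ) (hc : IsHyp n c) (hp : IsHyp n p) (hq : IsHyp n q)
    (hae : ∀ᵐ x ∂μ, IsHyp n x ∧ hdist n c x ≤ r)
    (hintp : (∫ x, hlog n p x ∂μ) = 0)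
    (hintq : (∫ x, sinhc (hdist n q x) • hlog n q x ∂μ) = 0) :
    hdist n p q ≤ 2 * r * (sinhc (2 * r) - 1) := by
  have hB : 2 * r * (sinhc (2*r) - 1) = Real.sinh (2*r) - 2*r := by
    have := sinhc_mul_self (2*r); linarith
  have hB0 : 0 ≤ Real.sinh (2*r) - 2*r := by
    have : (2*r) ≤ Real.sinh (2*r) := Real.self_le_sinh_iff.2 (by linarith)
    linarith
  rcases eq_or_ne q p with rfl | hne
  · rw [hdist_self hp, hB]; exact hB0
  set dpq := hdist n p q with hdpq
  have hdpq_pos : 0 < dpq := hdist_pos hp hq hne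
  haveI : (MeasureTheory.ae μ).NeBot := MeasureTheory.ae_neBot.2 (IsProbabilityMeasure.ne_zero μ)
  -- integrability of the vector integrands
  have hIp : Integrable (fun y => hlog n p y) μ := by
    refine Integrable.mono' (integrable_const
        (Real.cosh (hdist n (hypE n) c + r) + Real.cosh (hdist n c p + r) * p (Fin.last n)))
      ((measurable_hlog p).aestronglyMeasurable) ?_
    filter_upwards [hae] with y hy
    exact hlog_bound hp hy.1 hc hy.2
  have hIq : Integrable (fun y => hlog n q y) μ := by
    refine Integrable.mono' (integrable_const
        (Real.cosh (hdist n (hypE n) c + r) + Real.cosh (hdist n c q + r) * q (Fin.last n)))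
      ((measurable_hlog q).aestronglyMeasurable) ?_
    filter_upwards [hae] with y hy
    exact hlog_bound hq hy.1 hc hy.2
  have hIqs : Integrable (fun y => sinhc (hdist n q y) • hlog n q y) μ := by
    refine Integrable.mono' (integrable_const
        (Real.cosh (hdist n c q + r) * (Real.cosh (hdist n (hypE n) c + r)
          + Real.cosh (hdist n c q + r) * q (Fin.last n))))
      (((measurable_sinhc.comp (measurable_hdist q)).smul (measurable_hlog q)).aestronglyMeasurable) ?_
    filter_upwards [hae] with y hy
    rw [norm_smul, Real.norm_eq_abs]
    have ha := hdist_nonneg hq hy.1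
    have h1 : |sinhc (hdist n q y)| ≤ Real.cosh (hdist n c q + r) := by
      rw [abs_of_nonneg (by linarith [sinhc_ge_one ha])]
      calc sinhc (hdist n q y) ≤ Real.cosh (hdist n q y) := sinhc_le_cosh ha
        _ ≤ Real.cosh (hdist n c q + r) := by
            rw [Real.cosh_le_cosh]
            have ht := hdist_triangle hc hq hy.1
            have h3 : hdist n q y ≤ hdist n c q + r := by linarith [hy.2]
            rw [abs_of_nonneg ha, abs_of_nonneg (le_trans ha h3)]
            exact h3
    have h2 := hlog_bound hq hy.1 hc hy.2
    have hc1 : (0:ℝ) ≤ Real.cosh (hdist n (hypE n) c + r)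
        + Real.cosh (hdist n c q + r) * q (Fin.last n) := by
      have := Real.cosh_pos (hdist n (hypE n) c + r)
      have := Real.cosh_pos (hdist n c q + r)
      nlinarith [hyp_last_ge_one hq]
    exact mul_le_mul h1 h2 (norm_nonneg _) (le_of_lt (Real.cosh_pos _))
  -- Step B : the cosh-center is in the ball
  have hqc : hdist n q c ≤ r := by
    by_contra hgt
    push_neg at hgt
    have hIscalar : Integrable
        (fun y => mink n (sinhc (hdist n q y) • hlog n q y) (hlog n q c)) μ :=
      (minkCLM n (hlog n q c)).integrable_comp hIqs
    have hzero : ∫ y, mink n (sinhc (hdist n q y) • hlog n q y) (hlog n q c) ∂μ = 0 := by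
      have h := (minkCLM n (hlog n q c)).integral_comp_comm hIqs
      rw [hintq] at h
      simpa only [minkCLM_apply, mink_zero_left] using h
    have hnn : 0 ≤ᵐ[μ] fun y => mink n (sinhc (hdist n q y) • hlog n q y) (hlog n q c) := by
      filter_upwards [hae] with y hy
      have hsign := mink_hlog_sign hq hc hy.1 (lt_of_le_of_lt hy.2 hgt)
      have h1 : 1 ≤ sinhc (hdist n q y) := sinhc_ge_one (hdist_nonneg hq hy.1)
      rw [Pi.zero_apply, mink_smul_left]
      exact mul_nonneg (by linarith) hsign.1
    have hae0 := (integral_eq_zero_iff_of_nonneg_ae hnn hIscalar).1 hzero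
    have hqeq : ∀ᵐ y ∂μ, y = q ∧ hdist n c y ≤ r := by
      filter_upwards [hae, hae0] with y hy h0
      have hsign := mink_hlog_sign hq hc hy.1 (lt_of_le_of_lt hy.2 hgt)
      have h1 : 1 ≤ sinhc (hdist n q y) := sinhc_ge_one (hdist_nonneg hq hy.1)
      have h0' : sinhc (hdist n q y) * mink n (hlog n q y) (hlog n q c) = 0 := by
        have : mink n (sinhc (hdist n q y) • hlog n q y) (hlog n q c) = 0 := h0
        rwa [mink_smul_left] at this
      have h2 : mink n (hlog n q y) (hlog n q c) = 0 := by
        rcases mul_eq_zero.1 h0' with h | h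
        · linarith
        · exact h
      exact ⟨hsign.2 h2, hy.2⟩
    obtain ⟨y, hy1, hy2⟩ := hqeq.exists
    rw [hy1] at hy2
    have h3 : hdist n c q = hdist n q c := hdist_comm _ _
    linarith
  -- main chain
  have hIg1 : Integrable (fun y => mink n (hlog n p y) (hlog n p q)) μ :=
    (minkCLM n (hlog n p q)).integrable_comp hIp
  have hIg2 : Integrable (fun y => mink n (hlog n q y) (hlog n q p)) μ :=
    (minkCLM n (hlog n q p)).integrable_comp hIq
  have hIg3 : Integrable (fun y => mink n (sinhc (hdist n q y) • hlog n q y) (hlog n q p)) μ :=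
    (minkCLM n (hlog n q p)).integrable_comp hIqs
  have hg1zero : ∫ y, mink n (hlog n p y) (hlog n p q) ∂μ = 0 := by
    have h := (minkCLM n (hlog n p q)).integral_comp_comm hIp
    rw [hintp] at h
    simpa only [minkCLM_apply, mink_zero_left] using h
  have hg3zero : ∫ y, mink n (sinhc (hdist n q y) • hlog n q y) (hlog n q p) ∂μ = 0 := by
    have h := (minkCLM n (hlog n q p)).integral_comp_comm hIqs
    rw [hintq] at h
    simpa only [minkCLM_apply, mink_zero_left] using h
  have hlow : dpq^2 ≤ ∫ y, mink n (hlog n q y) (hlog n q p) ∂μ := by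
    have hpt : ∀ᵐ y ∂μ, dpq^2
        ≤ mink n (hlog n p y) (hlog n p q) + mink n (hlog n q y) (hlog n q p) := by
      filter_upwards [hae] with y hy
      exact pointwise_key hp hq hy.1
    have h1 : ∫ _, (dpq^2 : ℝ) ∂μ
        ≤ ∫ y, (mink n (hlog n p y) (hlog n p q) + mink n (hlog n q y) (hlog n q p)) ∂μ :=
      integral_mono_ae (integrable_const _) (hIg1.add hIg2) hpt
    rw [integral_add hIg1 hIg2, hg1zero, zero_add, integral_const, probReal_univ,
      one_smul] at h1
    exact h1
  have hup : ∫ y, mink n (hlog n q y) (hlog n q p) ∂μ ≤ (Real.sinh (2*r) - 2*r) * dpq := by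
    have heq : ∫ y, mink n (hlog n q y) (hlog n q p) ∂μ
        = ∫ y, (mink n (hlog n q y) (hlog n q p)
            - mink n (sinhc (hdist n q y) • hlog n q y) (hlog n q p)) ∂μ := by
      rw [integral_sub hIg2 hIg3, hg3zero, sub_zero]
    rw [heq]
    have hpt : ∀ᵐ y ∂μ, mink n (hlog n q y) (hlog n q p)
          - mink n (sinhc (hdist n q y) • hlog n q y) (hlog n q p)
        ≤ (Real.sinh (2*r) - 2*r) * dpq := by
      filter_upwards [hae] with y hy
      have ha : 0 ≤ hdist n q y := hdist_nonneg hq hy.1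
      have h2r : hdist n q y ≤ 2*r := by
        have ht := hdist_triangle hc hq hy.1
        have h3 : hdist n c q = hdist n q c := hdist_comm _ _
        linarith [hy.2]
      have hcs := mink_hlog_le hq hy.1 hp
      rw [hdist_comm q p] at hcs
      have hs1 : 1 ≤ sinhc (hdist n q y) := sinhc_ge_one ha
      rw [mink_smul_left]
      have h3 : mink n (hlog n q y) (hlog n q p)
            - sinhc (hdist n q y) * mink n (hlog n q y) (hlog n q p)
          ≤ (sinhc (hdist n q y) - 1) * |mink n (hlog n q y) (hlog n q p)| := by
        nlinarith [neg_abs_le (mink n (hlog n q y) (hlog n q p)),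
          le_abs_self (mink n (hlog n q y) (hlog n q p))]
      have h4 : (sinhc (hdist n q y) - 1) * |mink n (hlog n q y) (hlog n q p)|
          ≤ (sinhc (hdist n q y) - 1) * (hdist n q y * dpq) :=
        mul_le_mul_of_nonneg_left hcs (by linarith)
      have h5 : (sinhc (hdist n q y) - 1) * (hdist n q y * dpq)
          = (Real.sinh (hdist n q y) - hdist n q y) * dpq := by
        linear_combination dpq * (sinhc_mul_self (hdist n q y))
      have h6 : (Real.sinh (hdist n q y) - hdist n q y) * dpq
          ≤ (Real.sinh (2*r) - 2*r) * dpq :=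
        mul_le_mul_of_nonneg_right (sinh_sub_mono ha h2r) (le_of_lt hdpq_pos)
      linarith
    have h7 := integral_mono_ae (hIg2.sub hIg3) (integrable_const _) hpt
    rwa [integral_const, probReal_univ, one_smul] at h7
  rw [hB]
  nlinarith [le_trans hlow hup, hdpq_pos]

end main2


/-- `2r(sinhc(2r) - 1) = (4/3)r³ + O(r⁵)` as `r → 0`; moreover, if a
probability measure `μ` on hyperbolic `n`-space (hyperboloid model) is supported in a
ball of radius `r`, then its center of mass `p` (characterized by `∫ exp_p⁻¹ dμ = 0`)
and its cosh-center of mass `q` (characterized by `∫ sinhc(d(q,·)) exp_q⁻¹ dμ = 0`)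
satisfy `d(p,q) ≤ 2r(sinhc(2r) - 1)`. -/
theorem stmt19 :
    (fun r : ℝ => 2 * r * (sinhc (2 * r) - 1) - (4/3) * r ^ 3)
      =O[nhds 0] (fun r : ℝ => r ^ 5)
    ∧ ∀ (n : ℕ) (r : ℝ), 0 < r →
        ∀ (μ : Measure (Fin (n+1) → ℝ)), IsProbabilityMeasure μ →
        ∀ (c p q : Fin (n+1) → ℝ), IsHyp n c → IsHyp n p → IsHyp n q →
        (∀ᵐ x ∂μ, IsHyp n x ∧ hdist n c x ≤ r) →
        (∫ x, hlog n p x ∂μ) = 0 →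
        (∫ x, sinhc (hdist n q x) • hlog n q x ∂μ) = 0 →
        hdist n p q ≤ 2 * r * (sinhc (2 * r) - 1) := by
  constructor
  · exact part1
  · intro n r hr μ hμ c p q hc hp hq hae h1 h2
    exact part2 n r hr μ hμ c p q hc hp hq hae h1 h2
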